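/- Let G be a cubic graph with V = {v₁,…,v_n}, E = {e₁,…,e_m}. Construct G' with vertex set V ∪ {x,y} and edges {{x,v_i}, {y,v_i} : 1 ≤ i ≤ n}. Define habitats H_i = {v_i, x} for each i, and H'_ℓ = e_ℓ ∪ {x, y} for each e_ℓ ∈ E. Then G has a vertex cover of size at most p if and only if there exists F ⊆ E(G') of size at most n + p satisfying all habitats. -/

import Mathlib

open SimpleGraph
open scoped Classical

def SatisfiesHab {V : Type*} (F : Set (Sym2 V)) (H : Set V) : Prop :=
  (∀ v ∈ H, ∃ e ∈ F, v ∈ e) ∧ ((SimpleGraph.fromEdgeSet F).induce H).Connected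

/-- The complete bipartite-type graph on `V ⊕ Bool` with parts `{x, y}` (the two
`Sum.inr` vertices, `x = Sum.inr true`, `y = Sum.inr false`) and `V`, and all edges
between the parts. -/
def starsGraph (V : Type*) : SimpleGraph (V ⊕ Bool) :=
  SimpleGraph.fromRel (fun a b => ∃ v c, a = Sum.inl v ∧ b = Sum.inr c)

lemma connected_of_hub {W : Type*} (H : SimpleGraph W) (h : W)
    (hr : ∀ a, H.Reachable a h) : H.Connected := by
  haveI : Nonempty W := ⟨h⟩
  exact ⟨fun a b => (hr a).trans (hr b).symm⟩

lemma exists_adj_of_reachable {W : Type*} (H : SimpleGraph W) {a b : W}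
    (h : H.Reachable a b) (hne : a ≠ b) : ∃ c, H.Adj a c := by
  obtain ⟨w⟩ := h
  cases w with
  | nil => exact (hne rfl).elim
  | cons h p => exact ⟨_, h⟩

lemma mem_stars_edge {V : Type*} {e : Sym2 (V ⊕ Bool)}
    (he : e ∈ (starsGraph V).edgeSet) : ∃ v c, e = s(Sum.inl v, Sum.inr c) := by
  induction e using Sym2.ind with
  | _ a b =>
    rw [SimpleGraph.mem_edgeSet, starsGraph, SimpleGraph.fromRel_adj] at he
    rcases he with ⟨-, ⟨v, c, rfl, rfl⟩ | ⟨v, c, rfl, rfl⟩⟩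
    · exact ⟨v, c, rfl⟩
    · exact ⟨v, c, Sym2.eq_swap⟩

lemma stars_inj {V : Type*} (c : Bool) :
    Function.Injective (fun v : V => s(Sum.inl v, (Sum.inr c : V ⊕ Bool))) := by
  intro a b h
  simp only [Sym2.eq, Sym2.rel_iff', Prod.mk.injEq, Prod.swap_prod_mk] at h
  rcases h with ⟨h, -⟩ | ⟨h, -⟩ <;> simp_all

/-- Reduction from Cubic Vertex Cover: `G` cubic has a vertex cover of size at most `p`
iff there is `F ⊆ E(G')` of size at most `n + p` satisfying all habitats
`Hᵢ = {vᵢ, x}` and `H'ₗ = eₗ ∪ {x, y}`. -/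
theorem stmt5 {V : Type*} [Fintype V] (G : SimpleGraph V)
    (hcubic : ∀ v, (G.neighborSet v).ncard = 3) (p : ℕ) :
    (∃ C : Set V, C.ncard ≤ p ∧ ∀ e ∈ G.edgeSet, ∃ v ∈ C, v ∈ e) ↔
    (∃ F : Set (Sym2 (V ⊕ Bool)), F ⊆ (starsGraph V).edgeSet ∧
      F.ncard ≤ Fintype.card V + p ∧
      (∀ v : V, SatisfiesHab F {Sum.inl v, Sum.inr true}) ∧
      (∀ e ∈ G.edgeSet,
        SatisfiesHab F ({a | ∃ v ∈ e, a = Sum.inl v} ∪ {Sum.inr true, Sum.inr false}))) := by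
  constructor
  · rintro ⟨C, hCp, hCcov⟩
    refine ⟨(fun v : V => s(Sum.inl v, (Sum.inr true : V ⊕ Bool))) '' Set.univ ∪
      (fun v : V => s(Sum.inl v, (Sum.inr false : V ⊕ Bool))) '' C, ?_, ?_, ?_, ?_⟩
    · rintro e (⟨v, -, rfl⟩ | ⟨v, -, rfl⟩) <;>
      · rw [SimpleGraph.mem_edgeSet, starsGraph, SimpleGraph.fromRel_adj]
        exact ⟨by simp, Or.inl ⟨v, _, rfl, rfl⟩⟩
    · calc _ ≤ ((fun v : V => s(Sum.inl v, (Sum.inr true : V ⊕ Bool))) '' Set.univ).ncard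
              + ((fun v : V => s(Sum.inl v, (Sum.inr false : V ⊕ Bool))) '' C).ncard :=
            Set.ncard_union_le _ _
        _ ≤ Fintype.card V + p := by
            rw [Set.ncard_image_of_injective _ (stars_inj true),
              Set.ncard_image_of_injective _ (stars_inj false), Set.ncard_univ,
              Nat.card_eq_fintype_card]
            omega
    · intro v
      have hmem : s(Sum.inl v, (Sum.inr true : V ⊕ Bool)) ∈ (fun v : V => s(Sum.inl v, (Sum.inr true : V ⊕ Bool))) '' Set.univ ∪ (fun v : V => s(Sum.inl v, (Sum.inr false : V ⊕ Bool))) '' C :=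
        Or.inl ⟨v, Set.mem_univ v, rfl⟩
      constructor
      · rintro z (rfl | rfl) <;> exact ⟨_, hmem, by simp⟩
      · apply connected_of_hub _ ⟨Sum.inr true, Or.inr rfl⟩
        rintro ⟨z, hz | hz⟩
        · subst hz
          refine SimpleGraph.Adj.reachable ?_
          show (SimpleGraph.fromEdgeSet _).Adj (Sum.inl v) (Sum.inr true)
          rw [SimpleGraph.fromEdgeSet_adj]
          exact ⟨hmem, by simp⟩
        · subst hz; exact Reachable.refl _
    · intro e he
      induction e using Sym2.ind with
      | _ a b =>
        obtain ⟨w, hwC, hwe⟩ := hCcov _ he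
        have hmemT : ∀ v : V, s(Sum.inl v, (Sum.inr true : V ⊕ Bool)) ∈ (fun v : V => s(Sum.inl v, (Sum.inr true : V ⊕ Bool))) '' Set.univ ∪ (fun v : V => s(Sum.inl v, (Sum.inr false : V ⊕ Bool))) '' C :=
          fun v => Or.inl ⟨v, Set.mem_univ v, rfl⟩
        have hmemF : s(Sum.inl w, (Sum.inr false : V ⊕ Bool)) ∈ (fun v : V => s(Sum.inl v, (Sum.inr true : V ⊕ Bool))) '' Set.univ ∪ (fun v : V => s(Sum.inl v, (Sum.inr false : V ⊕ Bool))) '' C :=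
          Or.inr ⟨w, hwC, rfl⟩
        constructor
        · rintro z (⟨v, hv, rfl⟩ | (rfl | rfl))
          · exact ⟨_, hmemT v, by simp⟩
          · exact ⟨_, hmemT a, by simp⟩
          · exact ⟨_, hmemF, by simp⟩
        · have hxmem : (Sum.inr true : V ⊕ Bool) ∈
              ({a_1 | ∃ v ∈ s(a, b), a_1 = Sum.inl v} ∪ {Sum.inr true, Sum.inr false}) :=
            Or.inr (Or.inl rfl)
          apply connected_of_hub _ ⟨Sum.inr true, hxmem⟩
          have hadjx : ∀ (v : V) (hv : Sum.inl v ∈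
              ({a_1 | ∃ v ∈ s(a, b), a_1 = Sum.inl v} ∪ {Sum.inr true, Sum.inr false} :
                Set (V ⊕ Bool))),
              ((SimpleGraph.fromEdgeSet ((fun v : V => s(Sum.inl v, (Sum.inr true : V ⊕ Bool))) '' Set.univ ∪ (fun v : V => s(Sum.inl v, (Sum.inr false : V ⊕ Bool))) '' C)).induce
                ({a_1 | ∃ v ∈ s(a, b), a_1 = Sum.inl v} ∪ {Sum.inr true, Sum.inr false})).Adj
                ⟨Sum.inl v, hv⟩ ⟨Sum.inr true, hxmem⟩ := by
            intro v hv
            show (SimpleGraph.fromEdgeSet _).Adj (Sum.inl v) (Sum.inr true)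
            rw [SimpleGraph.fromEdgeSet_adj]
            exact ⟨hmemT v, by simp⟩
          rintro ⟨z, hz⟩
          rcases hz with ⟨v, hv, rfl⟩ | (hz | hz)
          · exact (hadjx v _).reachable
          · subst hz; exact Reachable.refl _
          · have hwmem : Sum.inl w ∈
                ({a_1 | ∃ v ∈ s(a, b), a_1 = Sum.inl v} ∪ {Sum.inr true, Sum.inr false} :
                  Set (V ⊕ Bool)) := Or.inl ⟨w, hwe, rfl⟩
            have hadjy : ((SimpleGraph.fromEdgeSet ((fun v : V => s(Sum.inl v, (Sum.inr true : V ⊕ Bool))) '' Set.univ ∪ (fun v : V => s(Sum.inl v, (Sum.inr false : V ⊕ Bool))) '' C)).induce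
                ({a_1 | ∃ v ∈ s(a, b), a_1 = Sum.inl v} ∪ {Sum.inr true, Sum.inr false})).Adj
                ⟨z, Or.inr (Or.inr hz)⟩ ⟨Sum.inl w, hwmem⟩ := by
              show (SimpleGraph.fromEdgeSet _).Adj z (Sum.inl w)
              rw [SimpleGraph.fromEdgeSet_adj]
              subst hz
              exact ⟨by rw [Sym2.eq_swap]; exact hmemF, by simp⟩
            exact hadjy.reachable.trans (hadjx w hwmem).reachable
  · rintro ⟨F, hFsub, hFcard, hHab1, hHab2⟩
    have edge1 : ∀ v : V, s(Sum.inl v, (Sum.inr true : V ⊕ Bool)) ∈ F := by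
      intro v
      obtain ⟨-, hconn⟩ := hHab1 v
      have hr := hconn.preconnected ⟨Sum.inl v, Or.inl rfl⟩ ⟨Sum.inr true, Or.inr rfl⟩
      obtain ⟨⟨c, hc⟩, hadj⟩ := exists_adj_of_reachable _ hr
        (fun h => Sum.inl_ne_inr (congrArg Subtype.val h))
      have hadj' : (SimpleGraph.fromEdgeSet F).Adj (Sum.inl v) c := hadj
      rw [SimpleGraph.fromEdgeSet_adj] at hadj'
      rcases hc with rfl | rfl
      · exact (hadj'.2 rfl).elim
      · exact hadj'.1
    refine ⟨{v : V | s(Sum.inl v, (Sum.inr false : V ⊕ Bool)) ∈ F}, ?_, ?_⟩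
    · -- cardinality
      set A := (fun v : V => s(Sum.inl v, (Sum.inr true : V ⊕ Bool))) '' Set.univ with hA
      have hAF : A ⊆ F := by rintro e ⟨v, -, rfl⟩; exact edge1 v
      have hsub : (fun v : V => s(Sum.inl v, (Sum.inr false : V ⊕ Bool))) ''
          {v : V | s(Sum.inl v, (Sum.inr false : V ⊕ Bool)) ∈ F} ⊆ F \ A := by
        rintro e ⟨v, hv, rfl⟩
        refine ⟨hv, ?_⟩
        rintro ⟨u, -, hu⟩
        rw [Sym2.eq, Sym2.rel_iff', Prod.mk.injEq, Prod.swap_prod_mk] at hu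
        simp at hu
      have h1 : ({v : V | s(Sum.inl v, (Sum.inr false : V ⊕ Bool)) ∈ F}).ncard
          ≤ (F \ A).ncard := by
        rw [← Set.ncard_image_of_injective _ (stars_inj false)]
        exact Set.ncard_le_ncard hsub (Set.toFinite _)
      have h2 : (F \ A).ncard = F.ncard - A.ncard := Set.ncard_diff hAF (Set.toFinite _)
      have h3 : A.ncard = Fintype.card V := by
        rw [hA, Set.ncard_image_of_injective _ (stars_inj true), Set.ncard_univ,
          Nat.card_eq_fintype_card]
      have h4 : A.ncard ≤ F.ncard := Set.ncard_le_ncard hAF (Set.toFinite _)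
      omega
    · -- cover
      intro e he
      induction e using Sym2.ind with
      | _ a b =>
        obtain ⟨-, hconn⟩ := hHab2 _ he
        have hymem : (Sum.inr false : V ⊕ Bool) ∈
            ({a_1 | ∃ v ∈ s(a, b), a_1 = Sum.inl v} ∪ {Sum.inr true, Sum.inr false}) :=
          Or.inr (Or.inr rfl)
        have hxmem : (Sum.inr true : V ⊕ Bool) ∈
            ({a_1 | ∃ v ∈ s(a, b), a_1 = Sum.inl v} ∪ {Sum.inr true, Sum.inr false}) :=
          Or.inr (Or.inl rfl)
        have hr := hconn.preconnected ⟨Sum.inr false, hymem⟩ ⟨Sum.inr true, hxmem⟩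
        obtain ⟨⟨c, hc⟩, hadj⟩ := exists_adj_of_reachable _ hr (by simp)
        have hadj' : (SimpleGraph.fromEdgeSet F).Adj (Sum.inr false) c := hadj
        rw [SimpleGraph.fromEdgeSet_adj] at hadj'
        obtain ⟨u, d, hud⟩ := mem_stars_edge (hFsub hadj'.1)
        rw [Sym2.eq, Sym2.rel_iff', Prod.mk.injEq, Prod.swap_prod_mk] at hud
        rcases hud with ⟨h1, -⟩ | ⟨h1, h2⟩
        · exact absurd h1 (by simp)
        · -- c = Sum.inl u, d = false
          rcases hc with ⟨w, hw, hc⟩ | (hc | hc)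
          · obtain rfl : u = w := Sum.inl.inj hc
            refine ⟨u, ?_, hw⟩
            have := hadj'.1
            rwa [Sym2.eq_swap] at this
          · exact absurd hc (by simp)
          · exact absurd hc (by simp)
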